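/- Let a, b, c, m, μ be nonzero complex numbers and W(z, χ, φ₁, φ₂, φ₃) = μ²z + (m/2)χ² + a z χ φ₁ + b z φ₂φ₃ + c φ₁²φ₂. Then the set of common zeros of all five partial derivatives of W is nonempty and equals {(0, 0, 0, φ₂, φ₃) : φ₂φ₃ = -μ²/b}. -/

import Mathlib

/-- A critical point of a function of five complex variables. -/
def IsCrit5 (W : ℂ → ℂ → ℂ → ℂ → ℂ → ℂ) (z χ φ1 φ2 φ3 : ℂ) : Prop :=
  deriv (fun t => W t χ φ1 φ2 φ3) z = 0 ∧
  deriv (fun t => W z t φ1 φ2 φ3) χ = 0 ∧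
  deriv (fun t => W z χ t φ2 φ3) φ1 = 0 ∧
  deriv (fun t => W z χ φ1 t φ3) φ2 = 0 ∧
  deriv (fun t => W z χ φ1 φ2 t) φ3 = 0

lemma deriv_lin (p q x : ℂ) : deriv (fun t => p * t + q) x = p := by
  simpa using (((hasDerivAt_id x).const_mul p).add_const q).deriv

lemma deriv_quad (p q r x : ℂ) :
    deriv (fun t => p * t ^ 2 + q * t + r) x = 2 * p * x + q := by
  have h1 : HasDerivAt (fun t : ℂ => p * t ^ 2) (p * (2 * x)) x := by
    simpa using ((hasDerivAt_pow 2 x).const_mul p)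
  have h2 : HasDerivAt (fun t : ℂ => q * t) q x := by
    simpa using (hasDerivAt_id x).const_mul q
  have := ((h1.add h2).add_const r).deriv
  simp only [Pi.add_apply] at this
  rw [this]; ring

theorem stmt5 (a b c m μ : ℂ) (ha : a ≠ 0) (hb : b ≠ 0) (hc : c ≠ 0)
    (hm : m ≠ 0) (hμ : μ ≠ 0)
    (W : ℂ → ℂ → ℂ → ℂ → ℂ → ℂ)
    (hW : ∀ z χ φ1 φ2 φ3, W z χ φ1 φ2 φ3 =
      μ^2 * z + (m / 2) * χ^2 + a * z * χ * φ1 + b * z * φ2 * φ3 + c * φ1^2 * φ2) :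
    (∃ z χ φ1 φ2 φ3 : ℂ, IsCrit5 W z χ φ1 φ2 φ3) ∧
    (∀ z χ φ1 φ2 φ3 : ℂ, IsCrit5 W z χ φ1 φ2 φ3 ↔
      (z = 0 ∧ χ = 0 ∧ φ1 = 0 ∧ φ2 * φ3 = -μ^2 / b)) := by
  have key : ∀ z χ φ1 φ2 φ3 : ℂ, IsCrit5 W z χ φ1 φ2 φ3 ↔
      (μ^2 + a * χ * φ1 + b * φ2 * φ3 = 0 ∧
       m * χ + a * z * φ1 = 0 ∧
       2 * (c * φ2) * φ1 + a * z * χ = 0 ∧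
       b * z * φ3 + c * φ1 ^ 2 = 0 ∧
       b * z * φ2 = 0) := by
    intro z χ φ1 φ2 φ3
    unfold IsCrit5
    have e1 : (fun t => W t χ φ1 φ2 φ3) =
        (fun t => (μ^2 + a * χ * φ1 + b * φ2 * φ3) * t +
          ((m / 2) * χ^2 + c * φ1^2 * φ2)) := by
      funext t; rw [hW]; ring
    have e2 : (fun t => W z t φ1 φ2 φ3) =
        (fun t => (m / 2) * t ^ 2 + (a * z * φ1) * t +
          (μ^2 * z + b * z * φ2 * φ3 + c * φ1^2 * φ2)) := by
      funext t; rw [hW]; ring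
    have e3 : (fun t => W z χ t φ2 φ3) =
        (fun t => (c * φ2) * t ^ 2 + (a * z * χ) * t +
          (μ^2 * z + (m / 2) * χ^2 + b * z * φ2 * φ3)) := by
      funext t; rw [hW]; ring
    have e4 : (fun t => W z χ φ1 t φ3) =
        (fun t => (b * z * φ3 + c * φ1 ^ 2) * t +
          (μ^2 * z + (m / 2) * χ^2 + a * z * χ * φ1)) := by
      funext t; rw [hW]; ring
    have e5 : (fun t => W z χ φ1 φ2 t) =
        (fun t => (b * z * φ2) * t +
          (μ^2 * z + (m / 2) * χ^2 + a * z * χ * φ1 + c * φ1^2 * φ2)) := by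
      funext t; rw [hW]; ring
    rw [e1, e2, e3, e4, e5, deriv_lin, deriv_quad, deriv_quad, deriv_lin, deriv_lin]
    constructor
    · rintro ⟨h1, h2, h3, h4, h5⟩
      refine ⟨h1, ?_, h3, h4, h5⟩
      have : 2 * (m / 2) * χ + a * z * φ1 = m * χ + a * z * φ1 := by ring
      rw [← this]; exact h2
    · rintro ⟨h1, h2, h3, h4, h5⟩
      refine ⟨h1, ?_, h3, h4, h5⟩
      have : 2 * (m / 2) * χ + a * z * φ1 = m * χ + a * z * φ1 := by ring
      rw [this]; exact h2
  have main : ∀ z χ φ1 φ2 φ3 : ℂ, IsCrit5 W z χ φ1 φ2 φ3 ↔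
      (z = 0 ∧ χ = 0 ∧ φ1 = 0 ∧ φ2 * φ3 = -μ^2 / b) := by
    intro z χ φ1 φ2 φ3
    rw [key]
    constructor
    · rintro ⟨h1, h2, h3, h4, h5⟩
      rcases mul_eq_zero.1 h5 with h | hφ2
      · rcases mul_eq_zero.1 h with h | hz
        · exact absurd h hb
        · subst hz
          have hχ : χ = 0 := by
            have := h2; simp at this
            rcases this with h | h
            · exact absurd h hm
            · exact h
          have hφ1 : φ1 = 0 := by
            have := h4; simp [hc] at this
            simpa [pow_eq_zero_iff] using this
          subst hχ; subst hφ1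
          refine ⟨rfl, rfl, rfl, ?_⟩
          have : b * (φ2 * φ3) = -μ^2 := by linear_combination h1 - 1 * h1 + h1 - h1 + (by linear_combination h1 : μ^2 + b * φ2 * φ3 = 0)
          field_simp
          linear_combination this
      · -- φ2 = 0, show contradiction unless z = 0
        by_cases hz : z = 0
        · subst hz
          have hχ : χ = 0 := by
            have := h2; simp at this
            rcases this with h | h
            · exact absurd h hm
            · exact h
          have hφ1 : φ1 = 0 := by
            have := h4; simp [hc] at this
            simpa [pow_eq_zero_iff] using this
          subst hχ; subst hφ1; subst hφ2
          exfalso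
          apply hμ
          have : μ ^ 2 = 0 := by linear_combination h1
          exact pow_eq_zero_iff (n := 2) (by norm_num) |>.1 this
        · subst hφ2
          have hφ1ne : φ1 ≠ 0 := by
            intro h; subst h
            apply hμ
            have : μ ^ 2 = 0 := by linear_combination h1
            exact pow_eq_zero_iff (n := 2) (by norm_num) |>.1 this
          have hχ0 : χ = 0 := by
            have h3' : a * z * χ = 0 := by linear_combination h3
            rcases mul_eq_zero.1 h3' with h | h
            · rcases mul_eq_zero.1 h with h | h
              · exact absurd h ha
              · exact absurd h hz
            · exact h
          subst hχ0
          exfalso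
          apply hμ
          have : μ ^ 2 = 0 := by linear_combination h1
          exact pow_eq_zero_iff (n := 2) (by norm_num) |>.1 this
    · rintro ⟨hz, hχ, hφ1, hφ⟩
      subst hz; subst hχ; subst hφ1
      refine ⟨?_, by ring, by ring, by ring, by ring⟩
      have : φ2 * φ3 = -μ^2 / b := hφ
      field_simp at this
      linear_combination this
  exact ⟨⟨0, 0, 0, 1, -μ^2 / b, (main 0 0 0 1 (-μ^2/b)).2 ⟨rfl, rfl, rfl, by ring⟩⟩, main⟩
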